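/- Let m ≥ 3 and let E := GaloisField 2 m. Then the number of pairs (a₀, a₁) ∈ E × E such that the map x ↦ a₁·x^2 + a₀·x + a₁^(2^(m−1))·x^(2^(m−1)) has no nonzero root equals exactly 2^m − 1 + (2^m + 1)·(2^m − 1)/3, i.e. Fintype.card {p : E × E // ∀ x : E, p.2 * x^2 + p.1 * x + p.2 ^ (2^(m−1)) * x ^ (2^(m−1)) = 0 → x = 0} = 2^m − 1 + (4^m − 1)/3 (the division being exact since 3 divides 4^m − 1). -/

import Mathlib

open Finset
namespace Stmt19Aux
variable {K : Type*} [Field K] [Fintype K] [DecidableEq K] [CharP K 2]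

def rts (c d : K) : Finset K := univ.filter fun x => x ^ 3 + c * x + d = 0

lemma mem_rts {c d x : K} : x ∈ rts c d ↔ x ^ 3 + c * x + d = 0 := by
  simp [rts]

lemma h2 : (2 : K) = 0 := CharTwo.two_eq_zero

lemma add_eq_zero_iff {a b : K} : a + b = 0 ↔ a = b := by
  rw [add_eq_zero_iff_eq_neg, CharTwo.neg_eq]

lemma c_eq {c d x y : K} (hx : x ∈ rts c d) (hy : y ∈ rts c d) (hxy : x ≠ y) :
    c = x ^ 2 + x * y + y ^ 2 := by
  rw [mem_rts] at hx hy
  have hne : x + y ≠ 0 := fun h => hxy (add_eq_zero_iff.mp h)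
  have key : (x + y) * (c + (x ^ 2 + x * y + y ^ 2)) = 0 := by
    linear_combination hx - hy + (c * y + x ^ 2 * y + x * y ^ 2 + y ^ 3) * (h2 (K := K))
  rcases mul_eq_zero.mp key with h | h
  · exact absurd h hne
  · exact add_eq_zero_iff.mp h

lemma d_eq {c d x : K} (hx : x ∈ rts c d) : d = x ^ 3 + c * x := by
  rw [mem_rts] at hx
  have : (x ^ 3 + c * x) + d = 0 := by linear_combination hx
  exact (add_eq_zero_iff.mp this).symm

lemma third_eq {c d x y z : K} (hx : x ∈ rts c d) (hy : y ∈ rts c d) (hz : z ∈ rts c d)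
    (hxy : x ≠ y) (hzx : z ≠ x) (hzy : z ≠ y) : z = x + y := by
  have h1 : c = y ^ 2 + y * x + x ^ 2 := c_eq hy hx hxy.symm
  have h2' : c = z ^ 2 + z * x + x ^ 2 := c_eq hz hx hzx
  have key : (y + z) * (y + z + x) = 0 := by
    linear_combination h1 - h2' + (y * z + z ^ 2 + z * x + y * x + y ^ 2 - z * x - z ^ 2) * (h2 (K := K))
  rcases mul_eq_zero.mp key with h | h
  · exact absurd (add_eq_zero_iff.mp h).symm hzy
  · have : z = y + x := by
      have := add_eq_zero_iff.mp h
      linear_combination this - y * (h2 (K := K))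
    rw [this]; ring

lemma roots_of_pair (x y : K) :
    x ∈ rts (x ^ 2 + x * y + y ^ 2) (x ^ 3 + (x ^ 2 + x * y + y ^ 2) * x) ∧
    y ∈ rts (x ^ 2 + x * y + y ^ 2) (x ^ 3 + (x ^ 2 + x * y + y ^ 2) * x) ∧
    x + y ∈ rts (x ^ 2 + x * y + y ^ 2) (x ^ 3 + (x ^ 2 + x * y + y ^ 2) * x) := by
  refine ⟨mem_rts.mpr ?_, mem_rts.mpr ?_, mem_rts.mpr ?_⟩
  · linear_combination (x ^ 3 + x ^ 3 + x ^ 2 * y + x * y ^ 2) * (h2 (K := K))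
  · linear_combination (x ^ 3 + x ^ 2 * y + x * y ^ 2 + y ^ 3) * (h2 (K := K))
  · linear_combination (2 * x ^ 3 + 3 * x ^ 2 * y + 3 * x * y ^ 2 + y ^ 3) * (h2 (K := K))

lemma rts_card_le (c d : K) : #(rts c d) ≤ 3 := by
  classical
  set P : Polynomial K := Polynomial.X ^ 3 + Polynomial.C c * Polynomial.X + Polynomial.C d with hP
  have hdeg : P.natDegree = 3 := by rw [hP]; compute_degree!
  have hP0 : P ≠ 0 := fun h => by simp [h] at hdeg
  have hsub : rts c d ⊆ P.roots.toFinset := by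
    intro x hx
    rw [mem_rts] at hx
    rw [Multiset.mem_toFinset, Polynomial.mem_roots hP0]
    simp [Polynomial.IsRoot, hP, hx]
  calc #(rts c d) ≤ P.roots.toFinset.card := card_le_card hsub
    _ ≤ Multiset.card P.roots := Multiset.toFinset_card_le _
    _ ≤ P.natDegree := Polynomial.card_roots' P
    _ = 3 := hdeg

lemma sum_one : ∑ p : K × K, #(rts p.1 p.2) = Fintype.card K * Fintype.card K := by
  rw [Fintype.sum_prod_type]
  have h : ∀ c : K, ∑ d : K, #(rts c d) = Fintype.card K := by
    intro c
    have := Finset.card_eq_sum_card_fiberwise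
      (f := fun x : K => x ^ 3 + c * x) (s := (univ : Finset K)) (t := univ) (fun x _ => mem_univ _)
    rw [card_univ] at this
    rw [this]
    refine Finset.sum_congr rfl fun d _ => ?_
    congr 1
    ext x
    simp only [rts, mem_filter, mem_univ, true_and]
    rw [add_eq_zero_iff]
  simp [h, card_univ]

lemma sum_two : ∑ p : K × K, #((rts p.1 p.2).offDiag)
    = Fintype.card K * Fintype.card K - Fintype.card K := by
  rw [← Finset.card_sigma]
  rw [← card_univ (α := K), ← Finset.offDiag_card]
  refine Finset.card_bij' (fun a _ => a.2)
    (fun b _ => ⟨(b.1 ^ 2 + b.1 * b.2 + b.2 ^ 2,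
      b.1 ^ 3 + (b.1 ^ 2 + b.1 * b.2 + b.2 ^ 2) * b.1), b⟩) ?_ ?_ ?_ ?_
  · rintro ⟨p, x, y⟩ ha
    rw [Finset.mem_sigma] at ha
    have h := mem_offDiag.mp ha.2
    exact mem_offDiag.mpr ⟨mem_univ _, mem_univ _, h.2.2⟩
  · rintro ⟨x, y⟩ hb
    have h := mem_offDiag.mp hb
    obtain ⟨r1, r2, -⟩ := roots_of_pair (K := K) x y
    rw [Finset.mem_sigma]
    exact ⟨mem_univ _, mem_offDiag.mpr ⟨r1, r2, h.2.2⟩⟩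
  · rintro ⟨⟨c, d⟩, x, y⟩ ha
    rw [Finset.mem_sigma] at ha
    have h := mem_offDiag.mp ha.2
    have hc : c = x ^ 2 + x * y + y ^ 2 := c_eq h.1 h.2.1 h.2.2
    have hd : d = x ^ 3 + c * x := d_eq h.1
    simp only [Sigma.mk.inj_iff, heq_eq_eq, and_true]
    rw [← hc, ← hd]
  · rintro ⟨x, y⟩ hb
    rfl

/-- triples: a pair of distinct roots plus a third root distinct from both -/
def trip (c d : K) : Finset ((_ : K × K) × K) :=
  ((rts c d).offDiag).sigma (fun xy => (rts c d) \ {xy.1, xy.2})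

lemma trip_card (c d : K) :
    #(trip c d) = (#(rts c d) * #(rts c d) - #(rts c d)) * (#(rts c d) - 2) := by
  rw [trip, Finset.card_sigma, ← Finset.offDiag_card]
  have hterm : ∀ xy ∈ (rts c d).offDiag, #(rts c d \ {xy.1, xy.2}) = #(rts c d) - 2 := by
    intro xy hxy
    have h := mem_offDiag.mp hxy
    rw [Finset.card_sdiff_of_subset]
    · congr 1
      rw [Finset.card_insert_of_notMem (by simp [h.2.2]), Finset.card_singleton]
    · intro z hz
      simp only [Finset.mem_insert, Finset.mem_singleton] at hz
      rcases hz with rfl | rfl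
      · exact h.1
      · exact h.2.1
  rw [Finset.sum_congr rfl hterm, Finset.sum_const, smul_eq_mul]

lemma sum_three : ∑ p : K × K, #(trip p.1 p.2)
    = (Fintype.card K - 1) * (Fintype.card K - 2) := by
  classical
  rw [← Finset.card_sigma]
  have hR : ((univ : Finset K).erase 0).offDiag.card
      = (Fintype.card K - 1) * (Fintype.card K - 2) := by
    rw [Finset.offDiag_card, Finset.card_erase_of_mem (mem_univ _), card_univ]
    have e1 : ∀ a : ℕ, a * a - a = a * (a - 1) := by
      rintro (_ | k)
      · simp
      · have ha : (k + 1) * (k + 1) = (k + 1) * k + (k + 1) := by ring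
        have hb : (k + 1) * (k + 1 - 1) = (k + 1) * k := by simp
        omega
    rw [e1 (Fintype.card K - 1)]
    congr 1
  rw [← hR]
  refine Finset.card_bij' (fun a _ => a.2.1)
    (fun b _ => ⟨(b.1 ^ 2 + b.1 * b.2 + b.2 ^ 2,
      b.1 ^ 3 + (b.1 ^ 2 + b.1 * b.2 + b.2 ^ 2) * b.1), (b.1, b.2), b.1 + b.2⟩) ?_ ?_ ?_ ?_
  · rintro ⟨⟨c, d⟩, ⟨x, y⟩, z⟩ ha
    rw [Finset.mem_sigma] at ha
    obtain ⟨-, ha⟩ := ha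
    rw [trip, Finset.mem_sigma] at ha
    obtain ⟨hxy, hz⟩ := ha
    have h := mem_offDiag.mp hxy
    rw [Finset.mem_sdiff] at hz
    have hzx : z ≠ x := fun h' => hz.2 (by simp [h'])
    have hzy : z ≠ y := fun h' => hz.2 (by simp [h'])
    have hzxy : z = x + y := third_eq h.1 h.2.1 hz.1 h.2.2 hzx hzy
    refine mem_offDiag.mpr ⟨Finset.mem_erase.mpr ⟨?_, mem_univ _⟩,
      Finset.mem_erase.mpr ⟨?_, mem_univ _⟩, h.2.2⟩
    · rintro rfl
      exact hzy (by rw [hzxy, zero_add])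
    · rintro rfl
      exact hzx (by rw [hzxy, add_zero])
  · rintro ⟨x, y⟩ hb
    have h := mem_offDiag.mp hb
    have hx0 : x ≠ 0 := Finset.ne_of_mem_erase h.1
    have hy0 : y ≠ 0 := Finset.ne_of_mem_erase h.2.1
    obtain ⟨r1, r2, r3⟩ := roots_of_pair (K := K) x y
    rw [Finset.mem_sigma]
    refine ⟨mem_univ _, ?_⟩
    rw [trip, Finset.mem_sigma]
    refine ⟨mem_offDiag.mpr ⟨r1, r2, h.2.2⟩, Finset.mem_sdiff.mpr ⟨r3, ?_⟩⟩
    simp only [Finset.mem_insert, Finset.mem_singleton]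
    push_neg
    constructor
    · intro h'
      exact hy0 (by rwa [add_eq_left] at h')
    · intro h'
      exact hx0 (by rwa [add_eq_right] at h')
  · rintro ⟨⟨c, d⟩, ⟨x, y⟩, z⟩ ha
    rw [Finset.mem_sigma] at ha
    obtain ⟨-, ha⟩ := ha
    rw [trip, Finset.mem_sigma] at ha
    obtain ⟨hxy, hz⟩ := ha
    have h := mem_offDiag.mp hxy
    rw [Finset.mem_sdiff] at hz
    have hzx : z ≠ x := fun h' => hz.2 (by simp [h'])
    have hzy : z ≠ y := fun h' => hz.2 (by simp [h'])
    have hzxy : z = x + y := third_eq h.1 h.2.1 hz.1 h.2.2 hzx hzy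
    have hc : c = x ^ 2 + x * y + y ^ 2 := c_eq h.1 h.2.1 h.2.2
    have hd : d = x ^ 3 + c * x := d_eq h.1
    subst hzxy
    subst hd
    subst hc
    rfl
  · rintro ⟨x, y⟩ hb
    rfl

lemma key (hq : 3 ≤ Fintype.card K) :
    3 * #(univ.filter fun p : K × K => rts p.1 p.2 = ∅) = Fintype.card K * Fintype.card K - 1 := by
  classical
  set q := Fintype.card K with hqdef
  -- pointwise identity
  have point : ∀ k : ℕ, k ≤ 3 →
      6 * (if k = 0 then 1 else 0) + 6 * k + (k * k - k) * (k - 2) = 6 + 3 * (k * k - k) := by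
    intro k hk
    interval_cases k <;> decide
  have hsum : ∑ p : K × K, (6 * (if #(rts p.1 p.2) = 0 then 1 else 0) + 6 * #(rts p.1 p.2)
        + (#(rts p.1 p.2) * #(rts p.1 p.2) - #(rts p.1 p.2)) * (#(rts p.1 p.2) - 2))
      = ∑ p : K × K, (6 + 3 * (#(rts p.1 p.2) * #(rts p.1 p.2) - #(rts p.1 p.2))) :=
    Finset.sum_congr rfl fun p _ => point _ (rts_card_le p.1 p.2)
  rw [Finset.sum_add_distrib, Finset.sum_add_distrib, Finset.sum_add_distrib,
      ← Finset.mul_sum, ← Finset.mul_sum, ← Finset.mul_sum] at hsum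
  -- identify the pieces
  have e0 : ∑ p : K × K, (if #(rts p.1 p.2) = 0 then 1 else 0)
      = #(univ.filter fun p : K × K => rts p.1 p.2 = ∅) := by
    rw [Finset.sum_ite, Finset.sum_const, Finset.sum_const, smul_eq_mul, smul_eq_mul,
        mul_one, mul_zero, add_zero]
    congr 1
    apply Finset.filter_congr
    intro p _
    simp [Finset.card_eq_zero]
  have e1 : ∑ p : K × K, #(rts p.1 p.2) = q * q := sum_one
  have e2 : ∑ p : K × K, (#(rts p.1 p.2) * #(rts p.1 p.2) - #(rts p.1 p.2)) = q * q - q := by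
    rw [← sum_two]
    exact Finset.sum_congr rfl fun p _ => (Finset.offDiag_card _).symm
  have e3 : ∑ p : K × K, (#(rts p.1 p.2) * #(rts p.1 p.2) - #(rts p.1 p.2)) * (#(rts p.1 p.2) - 2)
      = (q - 1) * (q - 2) := by
    rw [← sum_three]
    exact Finset.sum_congr rfl fun p _ => (trip_card p.1 p.2).symm
  have e4 : ∑ _p : K × K, 6 = 6 * (q * q) := by
    rw [Finset.sum_const, smul_eq_mul, card_univ, Fintype.card_prod]
    ring
  rw [e0, e1, e2, e3] at hsum
  rw [e4] at hsum
  -- now pure arithmetic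
  obtain ⟨r, hr⟩ : ∃ r, q = r + 3 := ⟨q - 3, by omega⟩
  rw [hr] at hsum ⊢
  have a1 : (r + 3) * (r + 3) = r * r + 6 * r + 9 := by ring
  have a2 : (r + 3 - 1) * (r + 3 - 2) = r * r + 3 * r + 2 := by
    have : r + 3 - 1 = r + 2 := by omega
    have h' : r + 3 - 2 = r + 1 := by omega
    rw [this, h']; ring
  omega

lemma cond_iff {e : ℕ} (hpow : ∀ y : K, (y ^ e) ^ 2 = y) (a₀ a₁ : K) :
    (∀ x : K, a₁ * x ^ 2 + a₀ * x + a₁ ^ e * x ^ e = 0 → x = 0) ↔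
      ((a₁ = 0 ∧ a₀ ≠ 0) ∨ (a₁ ≠ 0 ∧ rts ((a₀ * a₁⁻¹) ^ 2) a₁⁻¹ = ∅)) := by
  have hL : ∀ x : K, (a₁ * x ^ 2 + a₀ * x + a₁ ^ e * x ^ e = 0)
      ↔ x * (a₁ ^ 2 * x ^ 3 + a₀ ^ 2 * x + a₁) = 0 := by
    intro x
    have hsq : (a₁ * x ^ 2 + a₀ * x + a₁ ^ e * x ^ e) ^ 2
        = x * (a₁ ^ 2 * x ^ 3 + a₀ ^ 2 * x + a₁) := by
      have h1 := hpow a₁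
      have h1' := hpow x
      linear_combination (x ^ e) ^ 2 * h1 + a₁ * h1' +
        (a₁ * x ^ 2 * a₀ * x + a₁ * x ^ 2 * a₁ ^ e * x ^ e + a₀ * x * a₁ ^ e * x ^ e) *
          (h2 (K := K))
    rw [← hsq, pow_eq_zero_iff (by norm_num : 2 ≠ 0)]
  have hmid : (∀ x : K, a₁ * x ^ 2 + a₀ * x + a₁ ^ e * x ^ e = 0 → x = 0)
      ↔ ∀ x : K, x ≠ 0 → a₁ ^ 2 * x ^ 3 + a₀ ^ 2 * x + a₁ ≠ 0 := by
    constructor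
    · intro h x hx hg
      exact hx (h x ((hL x).mpr (by rw [hg, mul_zero])))
    · intro h x hx
      by_contra hx0
      rcases mul_eq_zero.mp ((hL x).mp hx) with h' | h'
      · exact hx0 h'
      · exact h x hx0 h'
  rw [hmid]
  rcases eq_or_ne a₁ 0 with rfl | ha₁
  · simp only [ne_eq, not_true_eq_false, false_and, or_false, true_and]
    constructor
    · intro h
      have := h 1 one_ne_zero
      intro h0
      apply this
      rw [h0]; ring
    · intro h x hx
      intro hg
      apply hx
      have : a₀ ^ 2 * x = 0 := by rw [← hg]; ring
      rcases mul_eq_zero.mp this with h' | h'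
      · exact absurd (pow_eq_zero_iff (by norm_num : 2 ≠ 0) |>.mp h') h
      · exact h'
  · simp only [ha₁, false_and, false_or, ne_eq, not_false_eq_true, true_and]
    have hfac : ∀ x : K, a₁ ^ 2 * (x ^ 3 + (a₀ * a₁⁻¹) ^ 2 * x + a₁⁻¹)
        = a₁ ^ 2 * x ^ 3 + a₀ ^ 2 * x + a₁ := by
      intro x
      field_simp
    rw [Finset.eq_empty_iff_forall_notMem]
    constructor
    · intro h x hx
      rw [mem_rts] at hx
      have hx0 : x ≠ 0 := by
        rintro rfl
        refine ha₁ (inv_eq_zero.mp ?_)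
        linear_combination hx
      apply h x hx0
      rw [← hfac x, hx, mul_zero]
    · intro h x hx hg
      apply h x
      rw [mem_rts]
      have := hfac x
      rw [hg] at this
      rcases mul_eq_zero.mp this with h' | h'
      · exact absurd ((pow_eq_zero_iff (by norm_num : 2 ≠ 0)).mp h') ha₁
      · exact h'

lemma count {e : ℕ} (hpow : ∀ y : K, (y ^ e) ^ 2 = y) :
    #(univ.filter fun p : K × K => ∀ x : K, p.2 * x ^ 2 + p.1 * x + p.2 ^ e * x ^ e = 0 → x = 0)
      = (Fintype.card K - 1) + #(univ.filter fun p : K × K => rts p.1 p.2 = ∅) := by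
  classical
  have hpow2 : ∀ y : K, (y ^ 2) ^ e = y := by
    intro y
    rw [← pow_mul, mul_comm, pow_mul, hpow]
  have hfc : (univ.filter fun p : K × K =>
        ∀ x : K, p.2 * x ^ 2 + p.1 * x + p.2 ^ e * x ^ e = 0 → x = 0)
      = univ.filter (fun p : K × K =>
        (p.2 = 0 ∧ p.1 ≠ 0) ∨ (p.2 ≠ 0 ∧ rts ((p.1 * p.2⁻¹) ^ 2) p.2⁻¹ = ∅)) :=
    Finset.filter_congr (fun p _ => cond_iff hpow p.1 p.2)
  rw [hfc]
  rw [Finset.filter_or, Finset.card_union_of_disjoint]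
  · congr 1
    · -- first piece has q - 1 elements
      have : (univ.filter fun p : K × K => p.2 = 0 ∧ p.1 ≠ 0)
          = (univ.filter fun a : K => a ≠ 0) ×ˢ {(0 : K)} := by
        ext ⟨a, b⟩
        simp only [Finset.mem_filter, mem_univ, true_and, Finset.mem_product,
          Finset.mem_singleton]
        tauto
      rw [this, Finset.card_product, Finset.card_singleton, mul_one,
        Finset.filter_ne', Finset.card_erase_of_mem (mem_univ _), card_univ]
    · -- bijection with rootless cubics
      refine Finset.card_bij' (fun p _ => ((p.1 * p.2⁻¹) ^ 2, p.2⁻¹))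
        (fun b _ => (b.2⁻¹ * b.1 ^ e, b.2⁻¹)) ?_ ?_ ?_ ?_
      · rintro ⟨a₀, a₁⟩ ha
        rw [Finset.mem_filter] at ha
        exact Finset.mem_filter.mpr ⟨mem_univ _, ha.2.2⟩
      · rintro ⟨c, d⟩ hb
        rw [Finset.mem_filter] at hb
        have hd : d ≠ 0 := by
          rintro rfl
          rw [Finset.eq_empty_iff_forall_notMem] at hb
          exact hb.2 0 (mem_rts.mpr (by ring))
        refine Finset.mem_filter.mpr ⟨mem_univ _, by simpa using inv_ne_zero hd, ?_⟩
        have h1 : (d⁻¹ * c ^ e * (d⁻¹)⁻¹) ^ 2 = c := by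
          rw [inv_inv]
          field_simp
          exact hpow c
        have h2' : (d⁻¹)⁻¹ = d := inv_inv d
        rw [h1, h2']
        exact hb.2
      · rintro ⟨a₀, a₁⟩ ha
        rw [Finset.mem_filter] at ha
        have ha₁ : a₁ ≠ 0 := ha.2.1
        have : ((a₀ * a₁⁻¹) ^ 2) ^ e = a₀ * a₁⁻¹ := hpow2 _
        simp only [inv_inv, Prod.mk.injEq, and_true]
        rw [this]
        field_simp
      · rintro ⟨c, d⟩ hb
        rw [Finset.mem_filter] at hb
        have hd : d ≠ 0 := by
          rintro rfl
          rw [Finset.eq_empty_iff_forall_notMem] at hb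
          exact hb.2 0 (mem_rts.mpr (by ring))
        simp only [inv_inv, Prod.mk.injEq, and_true]
        rw [show d⁻¹ * c ^ e * d = c ^ e by field_simp]
        exact hpow c
  · rw [Finset.disjoint_left]
    rintro ⟨a₀, a₁⟩ h1 h2
    rw [Finset.mem_filter] at h1 h2
    exact h2.2.1 h1.2.1

end Stmt19Aux

/-- The number of pairs `(a₀, a₁) ∈ GF(2^m)²` for which the linearized polynomial
`L_{(a₀,a₁)}(x) = a₁ x² + a₀ x + a₁^{2^{m-1}} x^{2^{m-1}}` has no nonzero root equals
exactly `2^m - 1 + (4^m - 1)/3`. -/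
theorem stmt19 (m : ℕ) (hm : 3 ≤ m) :
    @Fintype.card
        {p : GaloisField 2 m × GaloisField 2 m //
          ∀ x : GaloisField 2 m,
            p.2 * x ^ 2 + p.1 * x + p.2 ^ (2 ^ (m - 1)) * x ^ (2 ^ (m - 1)) = 0 → x = 0}
        (Fintype.ofFinite _)
      = 2 ^ m - 1 + (4 ^ m - 1) / 3 := by
  classical
  set K := GaloisField 2 m with hK
  haveI : Fintype K := Fintype.ofFinite K
  have hq : Fintype.card K = 2 ^ m := by
    rw [← Nat.card_eq_fintype_card]
    exact GaloisField.card 2 m (by omega)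
  have hpow : ∀ y : K, (y ^ (2 ^ (m - 1))) ^ 2 = y := by
    intro y
    rw [← pow_mul, ← pow_succ]
    have : m - 1 + 1 = m := by omega
    rw [this, ← hq]
    exact FiniteField.pow_card y
  have hcard : @Fintype.card
        {p : K × K // ∀ x : K,
            p.2 * x ^ 2 + p.1 * x + p.2 ^ (2 ^ (m - 1)) * x ^ (2 ^ (m - 1)) = 0 → x = 0}
        (Fintype.ofFinite _)
      = Fintype.card {p : K × K // ∀ x : K,
            p.2 * x ^ 2 + p.1 * x + p.2 ^ (2 ^ (m - 1)) * x ^ (2 ^ (m - 1)) = 0 → x = 0} := by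
    congr 1
    exact Subsingleton.elim _ _
  rw [hcard, Fintype.card_subtype, Stmt19Aux.count hpow]
  have hkey := Stmt19Aux.key (K := K) (by rw [hq]; calc (3:ℕ) ≤ 2 ^ 3 := by norm_num
                                          _ ≤ 2 ^ m := Nat.pow_le_pow_right (by norm_num) hm)
  rw [hq] at hkey
  rw [hq]
  have h4 : (4:ℕ) ^ m = 2 ^ m * 2 ^ m := by
    rw [show (4:ℕ) = 2 * 2 from rfl, mul_pow]
  rw [h4]
  have h8 : 8 ≤ 2 ^ m := by calc (8:ℕ) = 2 ^ 3 := rfl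
                                 _ ≤ 2 ^ m := Nat.pow_le_pow_right (by norm_num) hm
  omega
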